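/- One has 𝒢(1,0) = −1. -/

import Mathlib

open intervalIntegral Real Complex

/-- `u(t) = (−1 + i√(4t−1))/(2t)`. -/
noncomputable def uu (t : ℝ) : ℂ :=
  (-1 + Complex.I * (Real.sqrt (4 * t - 1) : ℝ)) / (2 * t)

/-- The renormalized Green's function of the triangular-lattice walk:
`𝒢(x,y) = (3/π) ∫_{1/4}^{1} (4t−1)^{−1/2} ( t^y Σ_{j=1}^{x} C(x,j)(1−t)^{j−1} Re(u(t)^j)
  − Σ_{ℓ=0}^{y−1} t^ℓ ) dt`. -/
noncomputable def calG (x y : ℕ) : ℝ :=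
  (3 / Real.pi) * ∫ t in (1/4 : ℝ)..1,
    (1 / Real.sqrt (4 * t - 1)) *
      (t ^ y * ∑ j ∈ Finset.Icc 1 x, (x.choose j : ℝ) * (1 - t) ^ (j - 1) * ((uu t) ^ j).re
        - ∑ l ∈ Finset.range y, t ^ l)

lemma uu_re (t : ℝ) : (uu t).re = -(1 / (2 * t)) := by
  have : (2 * (t : ℂ)) = ((2 * t : ℝ) : ℂ) := by push_cast; ring
  rw [uu, this, Complex.div_ofReal_re]
  simp [neg_div]

lemma integrand_integrable :
    IntervalIntegrable (fun t : ℝ => -(1 / (2 * t * Real.sqrt (4 * t - 1))))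
      MeasureTheory.volume (1/4) 1 := by
  have h1 : IntervalIntegrable (fun x : ℝ => x ^ (-(1/2) : ℝ)) MeasureTheory.volume 0 3 :=
    intervalIntegrable_rpow' (by norm_num)
  have h2 := h1.comp_sub_right 1
  have h3 := h2.comp_mul_left (c := 4) enorm_ne_top enorm_ne_top
  norm_num at h3
  have h4 : IntervalIntegrable (fun x : ℝ => 2 * (4 * x - 1) ^ (-(1/2) : ℝ))
      MeasureTheory.volume (1/4) 1 := h3.const_mul 2
  apply h4.mono_fun'
  · apply Measurable.aestronglyMeasurable
    fun_prop
  · filter_upwards [MeasureTheory.ae_restrict_mem measurableSet_uIoc] with t ht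
    have ht' : t ∈ Set.Ioc (1/4 : ℝ) 1 := by
      rwa [Set.uIoc_of_le (by norm_num)] at ht
    have h4t : (0 : ℝ) < 4 * t - 1 := by linarith [ht'.1]
    have htpos : (0 : ℝ) < t := by linarith [ht'.1]
    have hs : (0 : ℝ) < Real.sqrt (4 * t - 1) := Real.sqrt_pos.2 h4t
    rw [Real.norm_eq_abs, abs_neg, _root_.abs_of_nonneg (by positivity)]
    rw [Real.rpow_neg h4t.le, ← Real.sqrt_eq_rpow]
    rw [div_le_iff₀ (by positivity)]
    have : 2 * (√(4 * t - 1))⁻¹ * (2 * t * √(4 * t - 1)) = 4 * t := by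
      field_simp; ring
    rw [this]; linarith [ht'.1]

lemma integral_value :
    ∫ t in (1/4 : ℝ)..1, -(1 / (2 * t * Real.sqrt (4 * t - 1))) = -(Real.pi/3) := by
  have key := intervalIntegral.integral_eq_sub_of_hasDeriv_right_of_le (by norm_num : (1/4:ℝ) ≤ 1)
    (f := fun t : ℝ => -Real.arctan (Real.sqrt (4 * t - 1)))
    (f' := fun t : ℝ => -(1 / (2 * t * Real.sqrt (4 * t - 1))))
    (Continuous.continuousOn (by continuity))
    ?_ integrand_integrable
  · rw [key]
    norm_num
  · intro t ht
    have h4t : (0 : ℝ) < 4 * t - 1 := by linarith [ht.1]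
    have htpos : (0 : ℝ) < t := by linarith [ht.1]
    have hs : (0 : ℝ) < Real.sqrt (4 * t - 1) := Real.sqrt_pos.2 h4t
    have hlin : HasDerivAt (fun t : ℝ => 4 * t - 1) 4 t := by
      simpa using ((hasDerivAt_id t).const_mul 4).sub_const 1
    have hsq : HasDerivAt (fun t : ℝ => Real.sqrt (4 * t - 1))
        (1 / (2 * Real.sqrt (4 * t - 1)) * 4) t :=
      (Real.hasDerivAt_sqrt h4t.ne').comp t hlin
    have harc : HasDerivAt (fun t : ℝ => Real.arctan (Real.sqrt (4 * t - 1)))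
        (1 / (1 + Real.sqrt (4 * t - 1) ^ 2) * (1 / (2 * Real.sqrt (4 * t - 1)) * 4)) t :=
      (Real.hasDerivAt_arctan _).comp t hsq
    have heq : -(1 / (1 + Real.sqrt (4 * t - 1) ^ 2) * (1 / (2 * Real.sqrt (4 * t - 1)) * 4))
        = -(1 / (2 * t * Real.sqrt (4 * t - 1))) := by
      rw [Real.sq_sqrt h4t.le]
      field_simp
      ring
    exact (heq ▸ harc.neg).hasDerivWithinAt

/-- `𝒢(1,0) = −1`. -/
theorem calG_one_zero : calG 1 0 = -1 := by
  have hπ : Real.pi ≠ 0 := Real.pi_ne_zero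
  have hcong : ∫ t in (1/4 : ℝ)..1,
      (1 / Real.sqrt (4 * t - 1)) *
        (t ^ 0 * ∑ j ∈ Finset.Icc 1 1, ((1:ℕ).choose j : ℝ) * (1 - t) ^ (j - 1) * ((uu t) ^ j).re
          - ∑ l ∈ Finset.range 0, t ^ l)
      = ∫ t in (1/4 : ℝ)..1, -(1 / (2 * t * Real.sqrt (4 * t - 1))) := by
    apply intervalIntegral.integral_congr
    intro t _
    simp only [pow_zero, Finset.Icc_self, Finset.sum_singleton, Nat.choose_self, Nat.cast_one,
      pow_one, one_mul, Finset.range_zero, Finset.sum_empty, sub_zero]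
    rw [uu_re]
    field_simp
    ring
  rw [calG, hcong, integral_value]
  field_simp
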